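/- Let K be a proper convex cone in ℝ^d and let 𝒦 := j(F^K_cconv(ℝ^d)) ⊆ L^p((0,1] × S^{d-1}), 1 ≤ p < ∞. Then 𝒦 ⊆ j(F_cconv(ℝ^d)) and 𝒦 is a proper convex cone in the Banach space L^p((0,1] × S^{d-1}): 𝒦 is closed under addition and under multiplication by positive scalars, and if f ∈ 𝒦 and −f ∈ 𝒦 then f = 0. -/

import Mathlib

open scoped Pointwise ENNReal
open MeasureTheory Metric Set Filter

noncomputable section

/-- A `d`-dimensional fuzzy vector, identified with its characterizing function
`ξ : ℝ^d → [0,1]`: every `α`-cut (`α ∈ (0,1]`) is nonempty, compact and convex,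
and the support (the closure of `{ξ > 0}`) is compact and convex. -/
structure FuzzyVector (d : ℕ) : Type where
  xi : EuclideanSpace ℝ (Fin d) → ℝ
  xi_mem : ∀ v, xi v ∈ Set.Icc (0 : ℝ) 1
  cut_nonempty : ∀ α ∈ Set.Ioc (0 : ℝ) 1, {v | α ≤ xi v}.Nonempty
  cut_compact : ∀ α ∈ Set.Ioc (0 : ℝ) 1, IsCompact {v | α ≤ xi v}
  cut_convex : ∀ α ∈ Set.Ioc (0 : ℝ) 1, Convex ℝ {v | α ≤ xi v}
  supp_compact : IsCompact (closure {v | 0 < xi v})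
  supp_convex : Convex ℝ (closure {v | 0 < xi v})

namespace FuzzyVector

variable {d : ℕ}

/-- The `α`-cut `C_α(x*) = {v : α ≤ ξ(v)}` of a fuzzy vector. -/
def cut (x : FuzzyVector d) (α : ℝ) : Set (EuclideanSpace ℝ (Fin d)) :=
  {v | α ≤ x.xi v}

/-- The support function `s_{x*}(α, u) = sup_{a ∈ C_α(x*)} ⟪u, a⟫`. -/
def suppFn (x : FuzzyVector d) (α : ℝ) (u : EuclideanSpace ℝ (Fin d)) : ℝ :=
  sSup ((fun a => (inner ℝ u a : ℝ)) '' x.cut α)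

/-- `z = x ⊕ y`: the fuzzy sum, determined levelwise by Minkowski sums of `α`-cuts. -/
def IsSum (x y z : FuzzyVector d) : Prop :=
  ∀ α ∈ Set.Ioc (0 : ℝ) 1, z.cut α = x.cut α + y.cut α

/-- `z = c ⊙ x`: scalar multiplication of a fuzzy vector, determined levelwise. -/
def IsSmul (c : ℝ) (x z : FuzzyVector d) : Prop :=
  ∀ α ∈ Set.Ioc (0 : ℝ) 1, z.cut α = c • x.cut α

end FuzzyVector

/-- The unit sphere `S^{d-1}` in `ℝ^d`. -/
abbrev Sph (d : ℕ) := Metric.sphere (0 : EuclideanSpace ℝ (Fin d)) 1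

/-- The normalized surface measure on the unit sphere `S^{d-1}`. -/
def sphereMeasure (d : ℕ) : Measure (Sph d) :=
  (((volume : Measure (EuclideanSpace ℝ (Fin d))).toSphere Set.univ)⁻¹) •
    (volume : Measure (EuclideanSpace ℝ (Fin d))).toSphere

/-- Lebesgue measure on `(0,1]` times the normalized surface measure on `S^{d-1}`,
i.e. the underlying measure of `L^p((0,1] × S^{d-1})`. -/
def fmeasure (d : ℕ) : Measure (ℝ × Sph d) :=
  (volume.restrict (Set.Ioc (0 : ℝ) 1)).prod (sphereMeasure d)

/-- The function `(α, u) ↦ s_{x*}(α, u)` underlying the embedding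
`j : F_cconv(ℝ^d) → L^p((0,1] × S^{d-1})`. -/
def jfun {d : ℕ} (x : FuzzyVector d) : ℝ × Sph d → ℝ :=
  fun q => x.suppFn q.1 (q.2 : EuclideanSpace ℝ (Fin d))

/-- Membership in `F^K_cconv(ℝ^d)`: the support of the characterizing function is
contained in `K`. -/
def InFK {d : ℕ} (K : Set (EuclideanSpace ℝ (Fin d))) (x : FuzzyVector d) : Prop :=
  closure {v | 0 < x.xi v} ⊆ K

/-- The image `H = j(F_cconv(ℝ^d))` in `L^p((0,1] × S^{d-1})`. -/
def Hcone (d : ℕ) (p : ℝ) : Set (Lp ℝ (ENNReal.ofReal p) (fmeasure d)) :=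
  {f | ∃ x : FuzzyVector d, ⇑f =ᵐ[fmeasure d] jfun x}

/-- The image `𝒦 = j(F^K_cconv(ℝ^d))` in `L^p((0,1] × S^{d-1})`. -/
def Kcone (d : ℕ) (p : ℝ) (K : Set (EuclideanSpace ℝ (Fin d))) :
    Set (Lp ℝ (ENNReal.ofReal p) (fmeasure d)) :=
  {f | ∃ x : FuzzyVector d, InFK K x ∧ ⇑f =ᵐ[fmeasure d] jfun x}


namespace FuzzyVector

variable {d : ℕ}

-- ### basic lemmas

lemma cut_anti (x : FuzzyVector d) {α β : ℝ} (h : β ≤ α) : x.cut α ⊆ x.cut β :=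
  fun _ hv => le_trans h hv

lemma mem_cut {x : FuzzyVector d} {α : ℝ} {v} : v ∈ x.cut α ↔ α ≤ x.xi v := Iff.rfl

lemma cut_subset_supp (x : FuzzyVector d) {α : ℝ} (hα : 0 < α) :
    x.cut α ⊆ closure {v | 0 < x.xi v} :=
  fun _ hv => subset_closure (hα.trans_le hv)

lemma le_xi_of_forall_lt {x : FuzzyVector d} {α : ℝ} {v} (hα : 0 < α)
    (h : ∀ β, 0 < β → β < α → β ≤ x.xi v) : α ≤ x.xi v := by
  refine le_of_forall_lt fun c hc => ?_
  set β := (max c 0 + α) / 2 with hβ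
  have h1 : max c 0 < α := max_lt hc hα
  have hβpos : 0 < β := by
    have : (0:ℝ) ≤ max c 0 := le_max_right _ _
    simp only [hβ]; linarith
  have hβlt : β < α := by simp only [hβ]; linarith
  have hcβ : c < β := by
    have : c ≤ max c 0 := le_max_left _ _
    simp only [hβ]; linarith
  exact lt_of_lt_of_le hcβ (h β hβpos hβlt)

lemma cut_anti_add (x y : FuzzyVector d) {α β : ℝ} (h : β ≤ α) :
    x.cut α + y.cut α ⊆ x.cut β + y.cut β :=
  Set.add_subset_add (x.cut_anti h) (y.cut_anti h)

/-- key compactness lemma -/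
lemma mem_cut_add_of_forall_lt (x y : FuzzyVector d) {α : ℝ} (hα : α ∈ Set.Ioc (0:ℝ) 1)
    {v} (h : ∀ β, 0 < β → β < α → v ∈ x.cut β + y.cut β) :
    v ∈ x.cut α + y.cut α := by
  obtain ⟨hα0, hα1⟩ := hα
  set β : ℕ → ℝ := fun n => α - α / (n + 2) with hβdef
  have hβpos : ∀ n, 0 < β n := by
    intro n
    have h2 : α / (n + 2) < α := by
      apply div_lt_self hα0; push_cast; linarith
    simp only [hβdef]; linarith
  have hβlt : ∀ n, β n < α := by
    intro n
    have : 0 < α / (n + 2) := by positivity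
    simp only [hβdef]; linarith
  have hhalf : ∀ n, α / 2 ≤ β n := by
    intro n
    have h2 : α / (n + 2) ≤ α / 2 := by
      apply div_le_div_of_nonneg_left hα0.le (by norm_num) (by push_cast; linarith)
    simp only [hβdef]; linarith
  have hmem : ∀ n, v ∈ x.cut (β n) + y.cut (β n) := fun n => h _ (hβpos n) (hβlt n)
  choose a ha b hbb hab using fun n => Set.mem_add.mp (hmem n)
  -- all a n are in the compact set x.cut (α/2)
  have hhalfIoc : α / 2 ∈ Set.Ioc (0:ℝ) 1 := ⟨by positivity, by linarith⟩
  have hacpt : IsCompact (x.cut (α/2)) := x.cut_compact _ hhalfIoc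
  have hain : ∀ n, a n ∈ x.cut (α/2) := fun n => x.cut_anti (hhalf n) (ha n)
  obtain ⟨l, hl, φ, hφmono, hφtend⟩ := hacpt.tendsto_subseq hain
  have htendβ : Tendsto (fun n => β (φ n)) atTop (nhds α) := by
    have h1 : Tendsto (fun n : ℕ => α - α / (n + 2)) atTop (nhds (α - 0)) := by
      apply Tendsto.const_sub
      have := tendsto_natCast_atTop_atTop (R := ℝ)
      apply Tendsto.div_atTop (tendsto_const_nhds)
      apply tendsto_atTop_add_const_right _ 2 this
    rw [sub_zero] at h1
    exact h1.comp hφmono.tendsto_atTop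
  -- l ∈ x.cut α
  have hlmem : l ∈ x.cut α := by
    rw [mem_cut]
    refine le_xi_of_forall_lt hα0 fun γ hγ0 hγα => ?_
    have hev : ∀ᶠ n in atTop, a (φ n) ∈ x.cut γ := by
      filter_upwards [htendβ.eventually (eventually_ge_nhds hγα)] with n hn
      exact x.cut_anti hn (ha (φ n))
    have hclosed : IsClosed (x.cut γ) :=
      (x.cut_compact γ ⟨hγ0, by linarith⟩).isClosed
    exact hclosed.mem_of_tendsto hφtend hev
  -- v - l ∈ y.cut α
  have hbtend : Tendsto (fun n => v - a (φ n)) atTop (nhds (v - l)) :=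
    tendsto_const_nhds.sub hφtend
  have hblmem : v - l ∈ y.cut α := by
    rw [mem_cut]
    refine le_xi_of_forall_lt hα0 fun γ hγ0 hγα => ?_
    have hev : ∀ᶠ n in atTop, v - a (φ n) ∈ y.cut γ := by
      filter_upwards [htendβ.eventually (eventually_ge_nhds hγα)] with n hn
      have heq : v - a (φ n) = b (φ n) := by rw [← hab (φ n)]; abel
      rw [heq]
      exact y.cut_anti hn (hbb (φ n))
    have hclosed : IsClosed (y.cut γ) :=
      (y.cut_compact γ ⟨hγ0, by linarith⟩).isClosed
    exact hclosed.mem_of_tendsto hbtend hev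
  exact Set.mem_add.mpr ⟨l, hlmem, v - l, hblmem, by abel⟩


lemma image_inner_add (u : EuclideanSpace ℝ (Fin d)) (A B : Set (EuclideanSpace ℝ (Fin d))) :
    (fun a => (inner ℝ u a : ℝ)) '' (A + B)
      = (fun a => (inner ℝ u a : ℝ)) '' A + (fun a => (inner ℝ u a : ℝ)) '' B :=
  Set.image_add (innerSL ℝ u).toLinearMap.toAddMonoidHom (s := A) (t := B)

lemma image_inner_smul (u : EuclideanSpace ℝ (Fin d)) (c : ℝ) (A : Set (EuclideanSpace ℝ (Fin d))) :
    (fun a => (inner ℝ u a : ℝ)) '' (c • A) = c • ((fun a => (inner ℝ u a : ℝ)) '' A) :=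
  image_smul_set (innerSL ℝ u).toLinearMap c A

lemma smul_setOf_eq {c : ℝ} (hc : c ≠ 0) (P : EuclideanSpace ℝ (Fin d) → Prop) :
    {v | P (c⁻¹ • v)} = c • {v | P v} := by
  ext v
  rw [Set.mem_smul_set_iff_inv_smul_mem₀ hc]
  exact Iff.rfl

lemma bddAbove_image_cut (x : FuzzyVector d) {α : ℝ} (hα : α ∈ Set.Ioc (0:ℝ) 1)
    (u : EuclideanSpace ℝ (Fin d)) :
    BddAbove ((fun a => (inner ℝ u a : ℝ)) '' x.cut α) :=
  ((x.cut_compact α hα).image (continuous_const.inner continuous_id)).bddAbove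

lemma inner_le_suppFn (x : FuzzyVector d) {α : ℝ} (hα : α ∈ Set.Ioc (0:ℝ) 1)
    (u : EuclideanSpace ℝ (Fin d)) {a} (ha : a ∈ x.cut α) :
    (inner ℝ u a : ℝ) ≤ x.suppFn α u :=
  le_csSup (x.bddAbove_image_cut hα u) (Set.mem_image_of_mem _ ha)

lemma suppFn_isSum {x y z : FuzzyVector d} (h : IsSum x y z) {α : ℝ}
    (hα : α ∈ Set.Ioc (0:ℝ) 1) (u : EuclideanSpace ℝ (Fin d)) :
    z.suppFn α u = x.suppFn α u + y.suppFn α u := by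
  unfold suppFn
  rw [h α hα, image_inner_add]
  exact csSup_add ((x.cut_nonempty α hα).image _) (x.bddAbove_image_cut hα u)
    ((y.cut_nonempty α hα).image _) (y.bddAbove_image_cut hα u)

lemma suppFn_isSmul {c : ℝ} (hc : 0 < c) {x z : FuzzyVector d} (h : IsSmul c x z) {α : ℝ}
    (hα : α ∈ Set.Ioc (0:ℝ) 1) (u : EuclideanSpace ℝ (Fin d)) :
    z.suppFn α u = c * x.suppFn α u := by
  unfold suppFn
  rw [h α hα, image_inner_smul, Real.sSup_smul_of_nonneg hc.le]
  rfl

-- ### the fuzzy sum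

variable (x y : FuzzyVector d)

/-- characterizing function of the levelwise Minkowski sum -/
def sumXi (v : EuclideanSpace ℝ (Fin d)) : ℝ :=
  sSup {α | α ∈ Set.Ioc (0:ℝ) 1 ∧ v ∈ x.cut α + y.cut α}

lemma sumXi_bddAbove (v : EuclideanSpace ℝ (Fin d)) :
    BddAbove {α | α ∈ Set.Ioc (0:ℝ) 1 ∧ v ∈ x.cut α + y.cut α} :=
  ⟨1, fun β hβ => hβ.1.2⟩

lemma le_sumXi {α : ℝ} (hα : α ∈ Set.Ioc (0:ℝ) 1) {v} (hv : v ∈ x.cut α + y.cut α) :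
    α ≤ sumXi x y v :=
  le_csSup (sumXi_bddAbove x y v) ⟨hα, hv⟩

lemma sumXi_nonempty_of_pos {v} (h : 0 < sumXi x y v) :
    {γ | γ ∈ Set.Ioc (0:ℝ) 1 ∧ v ∈ x.cut γ + y.cut γ}.Nonempty := by
  by_contra hemp
  rw [Set.not_nonempty_iff_eq_empty] at hemp
  have h0 : sumXi x y v = 0 := by rw [sumXi, hemp, Real.sSup_empty]
  rw [h0] at h
  exact lt_irrefl _ h

lemma sumXi_mem_cut {α : ℝ} (hα : α ∈ Set.Ioc (0:ℝ) 1) {v} (hv : α ≤ sumXi x y v) :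
    v ∈ x.cut α + y.cut α := by
  refine mem_cut_add_of_forall_lt x y hα fun β hβ0 hβα => ?_
  have hne := sumXi_nonempty_of_pos x y (lt_of_lt_of_le hα.1 hv)
  obtain ⟨γ, hγ, hβγ⟩ := exists_lt_of_lt_csSup hne (lt_of_lt_of_le hβα hv)
  exact cut_anti_add x y hβγ.le hγ.2

lemma sumXi_cut {α : ℝ} (hα : α ∈ Set.Ioc (0:ℝ) 1) :
    {v | α ≤ sumXi x y v} = x.cut α + y.cut α :=
  Set.ext fun v => ⟨fun hv => sumXi_mem_cut x y hα hv, fun hv => le_sumXi x y hα hv⟩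

lemma sumXi_pos_iff {v} : 0 < sumXi x y v ↔
    ∃ β ∈ Set.Ioc (0:ℝ) 1, v ∈ x.cut β + y.cut β := by
  constructor
  · intro hv
    obtain ⟨γ, hγ⟩ := sumXi_nonempty_of_pos x y hv
    exact ⟨γ, hγ.1, hγ.2⟩
  · rintro ⟨β, hβ, hv⟩
    exact lt_of_lt_of_le hβ.1 (le_sumXi x y hβ hv)

/-- the sum of two fuzzy vectors -/
def sumFV : FuzzyVector d where
  xi := sumXi x y
  xi_mem v := by
    rcases Set.eq_empty_or_nonempty
        {α | α ∈ Set.Ioc (0:ℝ) 1 ∧ v ∈ x.cut α + y.cut α} with hemp | hne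
    · constructor <;> rw [sumXi, hemp, Real.sSup_empty] <;> norm_num
    · refine ⟨?_, csSup_le hne fun β hβ => hβ.1.2⟩
      obtain ⟨γ, hγ⟩ := hne
      exact le_trans hγ.1.1.le (le_csSup (sumXi_bddAbove x y v) hγ)
  cut_nonempty α hα := by
    rw [show {v | α ≤ sumXi x y v} = x.cut α + y.cut α from sumXi_cut x y hα]
    exact (x.cut_nonempty α hα).add (y.cut_nonempty α hα)
  cut_compact α hα := by
    rw [show {v | α ≤ sumXi x y v} = x.cut α + y.cut α from sumXi_cut x y hα]
    exact (x.cut_compact α hα).add (y.cut_compact α hα)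
  cut_convex α hα := by
    rw [show {v | α ≤ sumXi x y v} = x.cut α + y.cut α from sumXi_cut x y hα]
    exact (x.cut_convex α hα).add (y.cut_convex α hα)
  supp_compact := by
    refine IsCompact.of_isClosed_subset (x.supp_compact.add y.supp_compact)
      isClosed_closure (closure_minimal ?_ (x.supp_compact.add y.supp_compact).isClosed)
    intro v hv
    obtain ⟨β, hβ, hv⟩ := (sumXi_pos_iff x y).mp hv
    exact Set.add_subset_add (x.cut_subset_supp hβ.1) (y.cut_subset_supp hβ.1) hv
  supp_convex := by
    refine Convex.closure ?_
    intro v hv w hw s t hs ht hst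
    obtain ⟨β1, hβ1, hv1⟩ := (sumXi_pos_iff x y).mp hv
    obtain ⟨β2, hβ2, hw2⟩ := (sumXi_pos_iff x y).mp hw
    have hmin : min β1 β2 ∈ Set.Ioc (0:ℝ) 1 := ⟨lt_min hβ1.1 hβ2.1, (min_le_left _ _).trans hβ1.2⟩
    have hv' : v ∈ x.cut (min β1 β2) + y.cut (min β1 β2) :=
      cut_anti_add x y (min_le_left _ _) hv1
    have hw' : w ∈ x.cut (min β1 β2) + y.cut (min β1 β2) :=
      cut_anti_add x y (min_le_right _ _) hw2
    have hconv : Convex ℝ (x.cut (min β1 β2) + y.cut (min β1 β2)) :=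
      (x.cut_convex _ hmin).add (y.cut_convex _ hmin)
    exact (sumXi_pos_iff x y).mpr ⟨min β1 β2, hmin, hconv hv' hw' hs ht hst⟩

lemma isSum_sumFV : IsSum x y (sumFV x y) := fun α hα => sumXi_cut x y hα

lemma sumFV_supp_subset :
    closure {v | 0 < (sumFV x y).xi v} ⊆
      closure {v | 0 < x.xi v} + closure {v | 0 < y.xi v} := by
  refine closure_minimal ?_ (x.supp_compact.add y.supp_compact).isClosed
  intro v hv
  obtain ⟨β, hβ, hv⟩ := (sumXi_pos_iff x y).mp hv
  exact Set.add_subset_add (x.cut_subset_supp hβ.1) (y.cut_subset_supp hβ.1) hv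

-- ### scalar multiple

/-- the scalar multiple of a fuzzy vector by a positive scalar -/
def smulFV (c : ℝ) (hc : 0 < c) (x : FuzzyVector d) : FuzzyVector d where
  xi v := x.xi (c⁻¹ • v)
  xi_mem v := x.xi_mem _
  cut_nonempty α hα := by
    rw [smul_setOf_eq hc.ne' (fun v => α ≤ x.xi v)]
    exact (x.cut_nonempty α hα).smul_set
  cut_compact α hα := by
    rw [smul_setOf_eq hc.ne' (fun v => α ≤ x.xi v)]
    exact (x.cut_compact α hα).smul c
  cut_convex α hα := by
    rw [smul_setOf_eq hc.ne' (fun v => α ≤ x.xi v)]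
    exact (x.cut_convex α hα).smul c
  supp_compact := by
    rw [smul_setOf_eq hc.ne' (fun v => 0 < x.xi v)]
    rw [closure_smul₀' hc.ne']
    exact x.supp_compact.smul c
  supp_convex := by
    rw [smul_setOf_eq hc.ne' (fun v => 0 < x.xi v)]
    rw [closure_smul₀' hc.ne']
    exact x.supp_convex.smul c

lemma isSmul_smulFV (c : ℝ) (hc : 0 < c) (x : FuzzyVector d) :
    IsSmul c x (smulFV c hc x) := fun α hα =>
  smul_setOf_eq hc.ne' (fun v => α ≤ x.xi v)

lemma smulFV_supp (c : ℝ) (hc : 0 < c) (x : FuzzyVector d) :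
    closure {v | 0 < (smulFV c hc x).xi v} = c • closure {v | 0 < x.xi v} := by
  show closure {v | 0 < x.xi (c⁻¹ • v)} = _
  rw [smul_setOf_eq hc.ne' (fun v => 0 < x.xi v)]
  exact closure_smul₀' hc.ne' _

end FuzzyVector

instance (d : ℕ) : SFinite (sphereMeasure d) := by
  unfold sphereMeasure; infer_instance

lemma ae_fst_mem_Ioc (d : ℕ) : ∀ᵐ q ∂(fmeasure d), q.1 ∈ Set.Ioc (0:ℝ) 1 := by
  rw [ae_iff]
  refine measure_mono_null (fun q hq => ?_) (?_ : fmeasure d ((Set.Ioc (0:ℝ) 1)ᶜ ×ˢ Set.univ) = 0)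
  · exact ⟨hq, Set.mem_univ _⟩
  · rw [fmeasure, Measure.prod_prod, Measure.restrict_apply measurableSet_Ioc.compl]
    simp

lemma ae_prod_of_ae_fst {d : ℕ} {P : ℝ × Sph d → Prop}
    (h : ∀ᵐ a ∂(volume.restrict (Set.Ioc (0:ℝ) 1)), ∀ b, P (a, b)) :
    ∀ᵐ q ∂(fmeasure d), P q := by
  rw [ae_iff] at h ⊢
  refine measure_mono_null (fun q hq => ?_)
    (?_ : fmeasure d ({a | ¬∀ b, P (a, b)} ×ˢ Set.univ) = 0)
  · exact ⟨fun hall => hq (hall q.2), Set.mem_univ _⟩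
  · rw [fmeasure, Measure.prod_prod, h, zero_mul]

lemma toSphere_univ_pos {d : ℕ} (hd : 0 < d) :
    0 < (volume : Measure (EuclideanSpace ℝ (Fin d))).toSphere Set.univ := by
  haveI : Nonempty (Fin d) := ⟨⟨0, hd⟩⟩
  haveI : Nontrivial (EuclideanSpace ℝ (Fin d)) := by
    apply Module.nontrivial_of_finrank_pos (R := ℝ)
    rw [finrank_euclideanSpace_fin]; exact hd
  rw [Measure.toSphere_apply_univ]
  refine ENNReal.mul_pos ?_ (measure_ball_pos _ _ one_pos).ne'
  rw [finrank_euclideanSpace_fin]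
  exact_mod_cast hd.ne'

lemma sphereMeasure_pos {d : ℕ} (hd : 0 < d) {U : Set (Sph d)} (hU : IsOpen U)
    (hne : U.Nonempty) : 0 < sphereMeasure d U := by
  haveI : Nonempty (Fin d) := ⟨⟨0, hd⟩⟩
  set μ := (volume : Measure (EuclideanSpace ℝ (Fin d)))
  -- find the open set in the ambient space
  obtain ⟨T, hT, hTU⟩ := isOpen_induced_iff.mp hU
  -- the open cone
  set W : Set (EuclideanSpace ℝ (Fin d)) :=
    {x | x ≠ 0} ∩ ((fun x => ‖x‖⁻¹ • x) ⁻¹' T ∩ ball 0 1) with hW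
  have hWopen : IsOpen W := by
    have hcont : ContinuousOn (fun x : EuclideanSpace ℝ (Fin d) => ‖x‖⁻¹ • x) {x | x ≠ 0} := by
      refine ContinuousOn.smul (f := fun x : EuclideanSpace ℝ (Fin d) => ‖x‖⁻¹) ?_ continuousOn_id
      exact (continuous_norm.continuousOn).inv₀ fun x hx => norm_ne_zero_iff.mpr hx
    have : IsOpen ({x : EuclideanSpace ℝ (Fin d) | x ≠ 0} ∩ (fun x => ‖x‖⁻¹ • x) ⁻¹' T) :=
      hcont.isOpen_inter_preimage isOpen_ne hT
    rw [hW, ← Set.inter_assoc]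
    exact this.inter isOpen_ball
  have hWsub : W ⊆ Set.Ioo (0:ℝ) 1 • (Subtype.val '' U) := by
    rintro x ⟨hx0, hxT, hxball⟩
    have hnorm : 0 < ‖x‖ := norm_pos_iff.mpr hx0
    have hxlt : ‖x‖ < 1 := by simpa [dist_eq_norm] using hxball
    have husph : ‖x‖⁻¹ • x ∈ Sph d := by
      simp only [mem_sphere_iff_norm, sub_zero, norm_smul, norm_inv, norm_norm]
      field_simp
    refine Set.mem_smul.mpr ⟨‖x‖, ?_, ‖x‖⁻¹ • x, ?_, ?_⟩
    · exact ⟨hnorm, hxlt⟩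
    · exact ⟨⟨_, husph⟩, by rw [← hTU]; exact hxT, rfl⟩
    · rw [smul_inv_smul₀ hnorm.ne']
  have hWne : W.Nonempty := by
    obtain ⟨u, hu⟩ := hne
    refine ⟨(2:ℝ)⁻¹ • (u : EuclideanSpace ℝ (Fin d)), ?_, ?_, ?_⟩
    · intro h0
      have hn : ‖(u : EuclideanSpace ℝ (Fin d))‖ = 1 := by
        simpa [dist_eq_norm] using u.2
      have h2 : ‖(2:ℝ)⁻¹ • (u : EuclideanSpace ℝ (Fin d))‖ = 2⁻¹ := by
        rw [norm_smul, hn]; norm_num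
      rw [h0, norm_zero] at h2
      norm_num at h2
    · show ‖(2:ℝ)⁻¹ • (u : EuclideanSpace ℝ (Fin d))‖⁻¹ • ((2:ℝ)⁻¹ • (u : EuclideanSpace ℝ (Fin d))) ∈ T
      have hn : ‖(u : EuclideanSpace ℝ (Fin d))‖ = 1 := by
        simpa [dist_eq_norm] using u.2
      have : ‖(2:ℝ)⁻¹ • (u : EuclideanSpace ℝ (Fin d))‖ = 2⁻¹ := by
        rw [norm_smul, hn]; norm_num
      rw [this, smul_smul]
      norm_num
      have : (u : EuclideanSpace ℝ (Fin d)) ∈ T := by rw [← hTU] at hu; exact hu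
      exact this
    · show (2:ℝ)⁻¹ • (u : EuclideanSpace ℝ (Fin d)) ∈ ball 0 1
      have hn : ‖(u : EuclideanSpace ℝ (Fin d))‖ = 1 := by
        simpa [dist_eq_norm] using u.2
      simp only [mem_ball, dist_eq_norm, sub_zero, norm_smul, hn]
      norm_num
  -- positivity
  have htS : 0 < μ.toSphere U := by
    rw [μ.toSphere_apply' hU.measurableSet]
    refine ENNReal.mul_pos ?_ ?_
    · haveI : Nontrivial (EuclideanSpace ℝ (Fin d)) := by
        apply Module.nontrivial_of_finrank_pos (R := ℝ)
        rw [finrank_euclideanSpace_fin]; exact hd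
      simp only [ne_eq, Nat.cast_eq_zero]
      rw [finrank_euclideanSpace_fin]
      exact hd.ne'
    · refine (lt_of_lt_of_le (hWopen.measure_pos μ hWne) (measure_mono hWsub)).ne'
  have hfin : μ.toSphere Set.univ ≠ ⊤ := measure_ne_top _ _
  rw [sphereMeasure, Measure.smul_apply, smul_eq_mul]
  exact ENNReal.mul_pos (ENNReal.inv_ne_zero.mpr hfin) htS.ne'

instance (d : ℕ) : IsFiniteMeasure (sphereMeasure d) := by
  constructor
  rw [sphereMeasure, Measure.smul_apply, smul_eq_mul]
  exact lt_of_le_of_lt (ENNReal.inv_mul_le_one _) ENNReal.one_lt_top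

set_option maxHeartbeats 1000000 in
/-- if `K` is a proper convex cone in `ℝ^d`, then
`𝒦 = j(F^K_cconv(ℝ^d)) ⊆ j(F_cconv(ℝ^d))` and `𝒦` is a proper convex cone in the
Banach space `L^p((0,1] × S^{d-1})`. -/
theorem Kcone_proper_convex_cone {d : ℕ} (hd : 1 < d) (p : ℝ) (hp : 1 ≤ p)
    (K : Set (EuclideanSpace ℝ (Fin d)))
    (hKadd : ∀ a ∈ K, ∀ b ∈ K, a + b ∈ K)
    (hKsmul : ∀ c : ℝ, 0 < c → ∀ a ∈ K, c • a ∈ K)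
    (hKproper : ∀ a : EuclideanSpace ℝ (Fin d), a ∈ K → -a ∈ K → a = 0) :
    haveI : Fact (1 ≤ ENNReal.ofReal p) := ⟨ENNReal.one_le_ofReal.mpr hp⟩
    Kcone d p K ⊆ Hcone d p ∧
    (∀ f ∈ Kcone d p K, ∀ g ∈ Kcone d p K, f + g ∈ Kcone d p K) ∧
    (∀ c : ℝ, 0 < c → ∀ f ∈ Kcone d p K, c • f ∈ Kcone d p K) ∧
    (∀ f, f ∈ Kcone d p K → -f ∈ Kcone d p K → f = 0) := by

  haveI : Fact (1 ≤ ENNReal.ofReal p) := ⟨ENNReal.one_le_ofReal.mpr hp⟩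
  have hd0 : 0 < d := Nat.lt_of_lt_of_le Nat.one_pos hd.le
  refine ⟨?_, ?_, ?_, ?_⟩
  · rintro f ⟨x, -, hfx⟩
    exact ⟨x, hfx⟩
  · rintro f ⟨x, hxK, hfx⟩ g ⟨y, hyK, hgy⟩
    refine ⟨FuzzyVector.sumFV x y, ?_, ?_⟩
    · intro v hv
      obtain ⟨a, ha, b, hb, hab⟩ := Set.mem_add.mp (FuzzyVector.sumFV_supp_subset x y hv)
      rw [← hab]
      exact hKadd a (hxK ha) b (hyK hb)
    · have h1 : ⇑(f + g) =ᵐ[fmeasure d] ⇑f + ⇑g := Lp.coeFn_add f g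
      filter_upwards [h1, hfx, hgy, ae_fst_mem_Ioc d] with q hq1 hq2 hq3 hq4
      rw [hq1, Pi.add_apply, hq2, hq3]
      exact (FuzzyVector.suppFn_isSum (FuzzyVector.isSum_sumFV x y) hq4 _).symm
  · rintro c hc f ⟨x, hxK, hfx⟩
    refine ⟨FuzzyVector.smulFV c hc x, ?_, ?_⟩
    · intro v hv
      rw [FuzzyVector.smulFV_supp c hc x] at hv
      obtain ⟨a, ha, rfl⟩ := hv
      exact hKsmul c hc a (hxK ha)
    · have h1 : ⇑(c • f) =ᵐ[fmeasure d] c • ⇑f := Lp.coeFn_smul c f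
      filter_upwards [h1, hfx, ae_fst_mem_Ioc d] with q hq1 hq2 hq4
      rw [hq1, Pi.smul_apply, hq2, smul_eq_mul]
      exact (FuzzyVector.suppFn_isSmul hc (FuzzyVector.isSmul_smulFV c hc x) hq4 _).symm
  · rintro f ⟨x, hxK, hfx⟩ ⟨y, hyK, hgy⟩
    have hsum : ∀ᵐ q ∂(fmeasure d), jfun x q + jfun y q = 0 := by
      have hnf : ⇑(-f) =ᵐ[fmeasure d] -⇑f := Lp.coeFn_neg f
      filter_upwards [hfx, hgy, hnf] with q h1 h2 h3
      have hy : jfun y q = -(f q) := by rw [← h2, h3, Pi.neg_apply]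
      rw [← h1, hy]; ring
    unfold fmeasure at hsum
    have h2 := Measure.ae_ae_of_ae_prod hsum
    have hzero : ∀ᵐ α ∂(volume.restrict (Set.Ioc (0:ℝ) 1)),
        ∀ u : Sph d, jfun x (α, u) = 0 := by
      filter_upwards [h2, ae_restrict_mem measurableSet_Ioc] with α hα hαIoc
      have key : ∀ a ∈ x.cut α, ∀ b ∈ y.cut α, a + b = 0 := by
        intro a ha b hb
        by_contra hab
        set w : EuclideanSpace ℝ (Fin d) := a + b with hw
        have hwne : w ≠ 0 := hab
        set U : Set (Sph d) := {u | 0 < (inner ℝ (u : EuclideanSpace ℝ (Fin d)) w : ℝ)} with hU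
        have hUopen : IsOpen U := by
          have hcont : Continuous fun u : Sph d =>
              (inner ℝ (u : EuclideanSpace ℝ (Fin d)) w : ℝ) :=
            continuous_subtype_val.inner continuous_const
          exact isOpen_lt continuous_const hcont
        have hUne : U.Nonempty := by
          have hwpos : (0:ℝ) < ‖w‖ := norm_pos_iff.mpr hwne
          have husph : ‖w‖⁻¹ • w ∈ Sph d := by
            simp only [mem_sphere_iff_norm, sub_zero, norm_smul, norm_inv, norm_norm]
            field_simp
          refine ⟨⟨‖w‖⁻¹ • w, husph⟩, ?_⟩
          show (0:ℝ) < inner ℝ (‖w‖⁻¹ • w) w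
          rw [real_inner_smul_left, real_inner_self_eq_norm_sq]
          positivity
        have hpos := sphereMeasure_pos hd0 hUopen hUne
        rw [ae_iff] at hα
        have hsub : U ⊆ {u : Sph d | ¬ (jfun x (α, u) + jfun y (α, u) = 0)} := by
          intro u hu hcontra
          have h1 : (inner ℝ (u : EuclideanSpace ℝ (Fin d)) a : ℝ) ≤ x.suppFn α u :=
            x.inner_le_suppFn hαIoc _ ha
          have h2 : (inner ℝ (u : EuclideanSpace ℝ (Fin d)) b : ℝ) ≤ y.suppFn α u :=
            y.inner_le_suppFn hαIoc _ hb
          have hiw : (inner ℝ (u : EuclideanSpace ℝ (Fin d)) w : ℝ)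
              = inner ℝ (u : EuclideanSpace ℝ (Fin d)) a + inner ℝ (u : EuclideanSpace ℝ (Fin d)) b := by
            rw [hw, inner_add_right]
          have hle : (inner ℝ (u : EuclideanSpace ℝ (Fin d)) w : ℝ) ≤ 0 := by
            have hj : x.suppFn α u + y.suppFn α u = 0 := hcontra
            rw [hiw]; linarith
          exact absurd hu (not_lt.mpr hle)
        exact hpos.ne' (le_antisymm (le_of_le_of_eq (measure_mono hsub) hα) zero_le)
      obtain ⟨a0, ha0⟩ := x.cut_nonempty α hαIoc
      obtain ⟨b0, hb0⟩ := y.cut_nonempty α hαIoc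
      have ha0K : a0 ∈ K := hxK (x.cut_subset_supp hαIoc.1 ha0)
      have hb0K : b0 ∈ K := hyK (y.cut_subset_supp hαIoc.1 hb0)
      have hab0 : a0 + b0 = 0 := key a0 ha0 b0 hb0
      have hb00 : b0 = -a0 := by
        rw [add_comm] at hab0
        exact eq_neg_of_add_eq_zero_left hab0
      have hnegK : -a0 ∈ K := by rw [← hb00]; exact hb0K
      have ha00 : a0 = 0 := hKproper a0 ha0K hnegK
      have hcut : x.cut α = {0} := by
        apply Set.eq_singleton_iff_unique_mem.mpr
        refine ⟨by rw [← ha00]; exact ha0, fun a ha => ?_⟩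
        have h := key a ha b0 hb0
        rw [hb00, ha00, neg_zero, add_zero] at h
        exact h
      intro u
      show x.suppFn α (u : EuclideanSpace ℝ (Fin d)) = 0
      rw [FuzzyVector.suppFn, hcut, Set.image_singleton, csSup_singleton, inner_zero_right]
    have hxz : jfun x =ᵐ[fmeasure d] (0 : ℝ × Sph d → ℝ) :=
      ae_prod_of_ae_fst (P := fun q => jfun x q = (0 : ℝ × Sph d → ℝ) q) hzero
    have hz : (0 : ℝ × Sph d → ℝ) =ᵐ[fmeasure d] ⇑(0 : Lp ℝ (ENNReal.ofReal p) (fmeasure d)) :=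
      (Lp.coeFn_zero ℝ (ENNReal.ofReal p) (fmeasure d)).symm
    exact Lp.ext ((hfx.trans hxz).trans hz)
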